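/- The element z = (1/|G|) ∑_{g∈G} (e,g) of D(H;G) satisfies az = za = ε(a)z for all a ∈ D(H;G); that is, z is a two-sided integral. -/
import Mathlib


open scoped BigOperators

noncomputable section

variable {G : Type*} [Group G] [Fintype G] [DecidableEq G]

/-- For a normal subgroup `H` of `G`, the conjugate `g⁻¹ h g` as an element of `H`. -/
def conjH (H : Subgroup G) [H.Normal] (g : G) (h : H) : H :=
  ⟨g⁻¹ * (h : G) * g, by
    simpa using Subgroup.Normal.conj_mem ‹H.Normal› (h : G) h.2 g⁻¹⟩

/-- The multiplication of `D(H;G)`, modelled on coefficient functions `H × G → ℂ`: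
`(h₁,g₁)(h₂,g₂) = δ_{h₁g₁, g₁h₂} (h₁, g₁g₂)`. -/
def Dmul (H : Subgroup G) [H.Normal] (a b : H × G → ℂ) : H × G → ℂ :=
  fun p => ∑ g₁ : G, a (p.1, g₁) * b (conjH H g₁ p.1, g₁⁻¹ * p.2)

/-- The basis element `(h,g)` of `D(H;G)`. -/
def bas (H : Subgroup G) (h : H) (g : G) : H × G → ℂ :=
  fun p => if p = (h, g) then 1 else 0

/-- The unit `∑_{h ∈ H} (h, e)` of `D(H;G)`. -/
def Done (H : Subgroup G) [Fintype H] : H × G → ℂ :=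
  ∑ h : H, bas H h 1

/-- The counit `ε(h,g) = δ_{h,e}` extended linearly. -/
def Dcounit (H : Subgroup G) (a : H × G → ℂ) : ℂ := ∑ g : G, a (1, g)

/-- The coproduct `Δ(h,g) = ∑_{t ∈ H} (t,g) ⊗ (t⁻¹h, g)`, on coefficient functions:
`D(H;G) ⊗ D(H;G)` is modelled as `(H × G) × (H × G) → ℂ`. -/
def Dcomul (H : Subgroup G) (a : H × G → ℂ) : (H × G) × (H × G) → ℂ :=
  fun p => if p.1.2 = p.2.2 then a (p.1.1 * p.2.1, p.1.2) else 0

/-- The element `z = (1/|G|) ∑_{g∈G} (e,g)` of `D(H;G)`. -/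
def Dint (H : Subgroup G) : H × G → ℂ :=
  fun p => if p.1 = 1 then (Fintype.card G : ℂ)⁻¹ else 0

/-- `z = (1/|G|)∑_g (e,g)` satisfies `az = za = ε(a)z` for all `a`,
i.e. `z` is a two-sided integral. -/
theorem statement5 (H : Subgroup G) [H.Normal] :
    ∀ a : H × G → ℂ,
      Dmul H a (Dint H) = Dcounit H a • Dint H ∧
      Dmul H (Dint H) a = Dcounit H a • Dint H := by
  intro a
  have hconj : ∀ (g : G) (h : H), conjH H g h = 1 ↔ h = 1 := by
    intro g h
    constructor
    · intro hh
      have : g⁻¹ * (h : G) * g = 1 := congrArg Subtype.val hh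
      ext
      group at this ⊢
      have := congrArg (fun x => g * x * g⁻¹) this
      simpa [mul_assoc] using this
    · intro hh
      subst hh
      ext
      simp [conjH]
  constructor
  · funext p
    simp only [Dmul, Dint, Dcounit, Pi.smul_apply, smul_eq_mul]
    by_cases hp : p.1 = 1
    · simp only [hp, if_true]
      rw [Finset.sum_mul]
      refine Finset.sum_congr rfl fun g₁ _ => ?_
      rw [if_pos ((hconj g₁ 1).mpr rfl)]
    · simp only [hp, if_false, mul_zero]
      rw [Finset.sum_eq_zero]
      intro g₁ _
      rw [if_neg (fun h => hp ((hconj g₁ p.1).mp h)), mul_zero]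
  · funext p
    simp only [Dmul, Dint, Dcounit, Pi.smul_apply, smul_eq_mul]
    by_cases hp : p.1 = 1
    · simp only [hp, if_true]
      have h1 : ∀ g₁ : G, conjH H g₁ (1 : H) = 1 := fun g₁ => (hconj g₁ 1).mpr rfl
      simp only [h1]
      rw [Finset.sum_mul]
      exact Fintype.sum_equiv ((Equiv.inv G).trans (Equiv.mulRight p.2)) _ _
        fun x => mul_comm _ _
    · simp [hp]
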